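/- For every real c > 0 there is a constant C > 0 such that for all t ≥ 1, |(1/t) ∫₀ᵗ (⌊c√s⌋ + 1/2 − c√s) ds| ≤ C t^{−1/2}. -/

import Mathlib

open Real Set

/-- Explicit continuous antiderivative of `u * (1/2 - Int.fract u)`. -/
noncomputable def auxPhi (u : ℝ) : ℝ :=
  (u - Int.fract u) * (Int.fract u * (1 - Int.fract u)) / 2
    + Int.fract u ^ 2 / 4 - Int.fract u ^ 3 / 3 - (u - Int.fract u) / 12

lemma auxPhi_continuous : Continuous auxPhi := by
  have h := ContinuousOn.comp_fract
    (f := fun (s v : ℝ) => (s - v) * (v * (1 - v)) / 2 + v ^ 2 / 4 - v ^ 3 / 3 - (s - v) / 12)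
    (s := fun x : ℝ => x)
    (by fun_prop) continuous_id (fun s => by ring)
  convert h using 1
  rfl

lemma auxPhi_hasDeriv (u : ℝ) :
    HasDerivWithinAt auxPhi (u * (1 / 2 - Int.fract u)) (Ici u) u := by
  set n := ⌊u⌋ with hn
  have hfl : Int.fract u = u - (n : ℝ) := by rw [hn, ← Int.self_sub_floor]
  set p : ℝ → ℝ := fun v =>
    (n : ℝ) * ((v - (n : ℝ)) * (1 - (v - (n : ℝ)))) / 2 + (v - (n : ℝ)) ^ 2 / 4
      - (v - (n : ℝ)) ^ 3 / 3 - (n : ℝ) / 12 with hp_def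
  have hid : HasDerivAt (fun v : ℝ => v - (n : ℝ)) 1 u := (hasDerivAt_id u).sub_const _
  have hp : HasDerivAt p (u * (1 / 2 - Int.fract u)) u := by
    have h := (((((hid.mul ((hasDerivAt_const u (1 : ℝ)).sub hid)).const_mul
      (n : ℝ)).div_const 2).add ((hid.pow 2).div_const 4)).sub
      ((hid.pow 3).div_const 3)).sub_const ((n : ℝ) / 12)
    refine h.congr_deriv ?_
    rw [hfl]; push_cast [Pi.sub_apply]; ring
  refine hp.hasDerivWithinAt.congr_of_eventuallyEq ?_ ?_
  · have hmem : (Ici u ∩ Iio ((n : ℝ) + 1)) ∈ nhdsWithin u (Ici u) :=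
      inter_mem_nhdsWithin _ (Iio_mem_nhds (Int.lt_floor_add_one u))
    filter_upwards [hmem] with v hv
    have hvn : ⌊v⌋ = n := by
      refine Int.floor_eq_iff.mpr ⟨le_trans (by rw [hn]; exact Int.floor_le u) hv.1, ?_⟩
      exact_mod_cast hv.2
    have hfv : Int.fract v = v - (n : ℝ) := by rw [← hvn, ← Int.self_sub_floor]
    simp only [auxPhi, hfv, hp_def]; ring
  · simp only [auxPhi, hfl, hp_def]; ring

lemma auxPhi_bound {x : ℝ} (hx : 0 ≤ x) : |auxPhi x| ≤ x + 1 := by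
  have h1 : 0 ≤ Int.fract x := Int.fract_nonneg x
  have h2 : Int.fract x ≤ 1 := (Int.fract_lt_one x).le
  have h3 : (0 : ℝ) ≤ x - Int.fract x := by
    have h : (0 : ℤ) ≤ ⌊x⌋ := Int.floor_nonneg.mpr hx
    have : x - Int.fract x = (⌊x⌋ : ℝ) := by rw [← Int.self_sub_floor]; ring
    rw [this]; exact_mod_cast h
  have h4 : x - Int.fract x ≤ x := by linarith
  rw [abs_le]
  constructor <;> [skip; skip] <;>
    · simp only [auxPhi]
      nlinarith [mul_nonneg h3 (mul_nonneg h1 (by linarith : (0:ℝ) ≤ 1 - Int.fract x)),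
        sq_nonneg (Int.fract x), mul_nonneg h1 (mul_nonneg h1 h1),
        mul_nonneg h3 h1, pow_le_one₀ h1 h2 (n := 3), pow_le_one₀ h1 h2 (n := 2)]

/-- The key averaging estimate: the average over `[0,t]` of
`⌊c√s⌋ + 1/2 − c√s` is `O(t^{-1/2})`. -/
theorem average_floor_sqrt_estimate (c : ℝ) (hc : 0 < c) :
    ∃ C > (0 : ℝ), ∀ t : ℝ, 1 ≤ t →
      |(1 / t) * ∫ s in (0:ℝ)..t, ((⌊c * Real.sqrt s⌋ : ℝ) + 1 / 2 - c * Real.sqrt s)| ≤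
        C * t ^ (-(1/2) : ℝ) := by
  refine ⟨2 * (c + 1) / c ^ 2, by positivity, ?_⟩
  intro t ht
  have ht0 : (0 : ℝ) < t := lt_of_lt_of_le one_pos ht
  set s0 := Real.sqrt t with hs0def
  have hs1 : 1 ≤ s0 := by
    rw [hs0def]; exact Real.one_le_sqrt.mpr ht
  have hs0pos : 0 < s0 := lt_of_lt_of_le one_pos hs1
  have hst : s0 * s0 = t := Real.mul_self_sqrt ht0.le
  -- rewrite the integrand
  have hcong : ∀ x : ℝ, ((⌊c * Real.sqrt x⌋ : ℝ) + 1 / 2 - c * Real.sqrt x)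
      = 1 / 2 - Int.fract (c * Real.sqrt x) := by
    intro x
    rw [← Int.self_sub_floor]; ring
  -- FTC with the explicit antiderivative
  have hI : (∫ x in (0:ℝ)..t, ((⌊c * Real.sqrt x⌋ : ℝ) + 1 / 2 - c * Real.sqrt x))
      = (2 / c ^ 2) * auxPhi (c * s0) := by
    rw [intervalIntegral.integral_congr (g := fun x => 1 / 2 - Int.fract (c * Real.sqrt x))
      (fun x _ => hcong x)]
    have key : (∫ x in (0:ℝ)..t, (1 / 2 - Int.fract (c * Real.sqrt x)))
        = (2 / c ^ 2) * auxPhi (c * Real.sqrt t) - (2 / c ^ 2) * auxPhi (c * Real.sqrt 0) := by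
      apply intervalIntegral.integral_eq_sub_of_hasDeriv_right
      · exact (continuous_const.mul (auxPhi_continuous.comp
          (continuous_const.mul Real.continuous_sqrt))).continuousOn
      · intro x hx
        rw [min_eq_left ht0.le, max_eq_right ht0.le] at hx
        have hx0 : 0 < x := hx.1
        have hsx : 0 < Real.sqrt x := Real.sqrt_pos.mpr hx0
        have h1 : HasDerivWithinAt (fun y => c * Real.sqrt y) (c * (1 / (2 * Real.sqrt x)))
            (Ici x) x := ((Real.hasDerivAt_sqrt hx0.ne').const_mul c).hasDerivWithinAt
        have hmaps : MapsTo (fun y => c * Real.sqrt y) (Ici x) (Ici (c * Real.sqrt x)) :=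
          fun v hv => mul_le_mul_of_nonneg_left (Real.sqrt_le_sqrt hv) hc.le
        have h3 := (auxPhi_hasDeriv (c * Real.sqrt x)).comp x h1 hmaps
        have h4 := h3.const_mul (2 / c ^ 2)
        have h5 := h4.mono (Ioi_subset_Ici_self)
        convert h5 using 1
        · funext y; rfl
        field_simp
      · have hmono : Monotone fun x : ℝ => ((⌊c * Real.sqrt x⌋ : ℤ) : ℝ) := by
          intro a b hab
          exact Int.cast_le.mpr (Int.floor_le_floor
            (mul_le_mul_of_nonneg_left (Real.sqrt_le_sqrt hab) hc.le))
        have hA := hmono.intervalIntegrable (μ := MeasureTheory.volume) (a := 0) (b := t)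
        have hB : IntervalIntegrable (fun x : ℝ => 1 / 2 - c * Real.sqrt x) MeasureTheory.volume
            0 t := (continuous_const.sub (continuous_const.mul Real.continuous_sqrt)).intervalIntegrable _ _
        have heq : (fun x : ℝ => 1 / 2 - Int.fract (c * Real.sqrt x))
            = fun x : ℝ => ((⌊c * Real.sqrt x⌋ : ℤ) : ℝ) + (1 / 2 - c * Real.sqrt x) := by
          funext x
          rw [← Int.self_sub_floor]; ring
        rw [heq]
        exact hA.add hB
    rw [key]
    have : auxPhi (c * Real.sqrt 0) = 0 := by
      simp [auxPhi, Real.sqrt_zero]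
    rw [this, ← hs0def]
    ring
  rw [hI]
  have hbound : |auxPhi (c * s0)| ≤ c * s0 + 1 :=
    auxPhi_bound (by positivity)
  have hrpow : t ^ (-(1/2) : ℝ) = s0⁻¹ := by
    rw [Real.rpow_neg ht0.le, ← Real.sqrt_eq_rpow]
  rw [hrpow, abs_mul, abs_mul]
  rw [abs_of_pos (by positivity : (0:ℝ) < 1 / t), abs_of_pos (by positivity : (0:ℝ) < 2 / c ^ 2)]
  have key : c * s0 + 1 ≤ (c + 1) * s0 := by nlinarith
  calc 1 / t * (2 / c ^ 2 * |auxPhi (c * s0)|)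
      ≤ 1 / t * (2 / c ^ 2 * ((c + 1) * s0)) := by
        gcongr
        exact hbound.trans key
    _ = 2 * (c + 1) / c ^ 2 * s0⁻¹ := by
        rw [← hst]
        field_simp
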